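/- arXiv:1705.07826 — 4 statements merged into one kernel-verified Lean document; each statement's English description precedes it below -/
import Mathlib

section
/- Let g and ĝ be nonzero complex numbers and ρ a positive real. Then |1 - ρ·(g/ĝ)| < 1 if and only if ρ·Δm < 2·cos(Δp), where Δm = |g/ĝ| and Δp is the argument of g/ĝ. -/
theorem stmt_0 (g gh : ℂ) (hg : g ≠ 0) (hgh : gh ≠ 0) (ρ : ℝ) (hρ : 0 < ρ) :
    ‖1 - (ρ : ℂ) * (g / gh)‖ < 1 ↔
      ρ * ‖g / gh‖ < 2 * Real.cos (Complex.arg (g / gh)) := by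
  set z := g / gh with hzdef
  have hz : z ≠ 0 := div_ne_zero hg hgh
  have habs : (0:ℝ) < ‖z‖ := norm_pos_iff.mpr hz
  have hcos : Real.cos (Complex.arg z) = z.re / ‖z‖ := Complex.cos_arg hz
  have h1 : ‖1 - (ρ : ℂ) * z‖ < 1 ↔
      Complex.normSq (1 - (ρ : ℂ) * z) < 1 := by
    rw [← Complex.sq_norm]
    constructor
    · intro h; nlinarith [norm_nonneg (1 - (ρ:ℂ)*z)]
    · intro h; nlinarith [norm_nonneg (1 - (ρ:ℂ)*z)]
  rw [h1, hcos]
  have hns : Complex.normSq (1 - (ρ : ℂ) * z)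
      = 1 - 2 * ρ * z.re + ρ^2 * Complex.normSq z := by
    simp [Complex.normSq_apply, Complex.sub_re, Complex.sub_im, Complex.mul_re,
      Complex.mul_im]
    ring
  rw [hns]
  have hnsq : Complex.normSq z = ‖z‖^2 := (Complex.sq_norm z).symm
  rw [hnsq, div_eq_inv_mul, mul_comm]
  have hsimp : ‖z‖ * (2 * (‖z‖⁻¹ * z.re)) = 2 * z.re := by
    field_simp
  constructor
  · intro h
    have h2 : ‖z‖ * (ρ * ‖z‖) <
        ‖z‖ * (2 * (‖z‖⁻¹ * z.re)) := by
      rw [hsimp]; nlinarith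
    exact lt_of_mul_lt_mul_left h2 habs.le
  · intro h
    have h2 : ‖z‖ * (ρ * ‖z‖) <
        ‖z‖ * (2 * (‖z‖⁻¹ * z.re)) :=
      (mul_lt_mul_iff_right₀ habs).mpr h
    rw [hsimp] at h2
    nlinarith
end

section
/- Fix g ≠ 0, ĝ ≠ 0 in ℂ, yd ∈ ℂ, and ρ ∈ ℝ satisfying 0 < ρ < 2·cos(Δp)/Δm, where g/ĝ = Δm·e^{iΔp}, Δm > 0, and |Δp| < π/2. Then the iteration u_k = u_{k-1} + ρ·ĝ⁻¹·(yd − g·u_{k-1}) with any initial u₁ converges: u_k → yd/g and g·u_k → yd as k → ∞. -/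
theorem stmt_4 (g gh : ℂ) (hg : g ≠ 0) (hgh : gh ≠ 0) (yd : ℂ) (ρ : ℝ)
    (hρ0 : 0 < ρ)
    (hΔp : |Complex.arg (g / gh)| < Real.pi / 2)
    (hρ : ρ < 2 * Real.cos (Complex.arg (g / gh)) / ‖g / gh‖)
    (u : ℕ → ℂ)
    (hiter : ∀ k, 1 ≤ k → u (k + 1) = u k + (ρ : ℂ) * gh⁻¹ * (yd - g * u k)) :
    Filter.Tendsto u Filter.atTop (nhds (yd / g)) ∧
      Filter.Tendsto (fun k => g * u k) Filter.atTop (nhds yd) := by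
  set z : ℂ := g / gh with hz
  have hzne : z ≠ 0 := div_ne_zero hg hgh
  have hr : 0 < ‖z‖ := norm_pos_iff.mpr hzne
  have hcos : 0 < Real.cos (Complex.arg z) := by
    apply Real.cos_pos_of_mem_Ioo
    constructor
    · linarith [abs_lt.mp hΔp]
    · linarith [abs_lt.mp hΔp]
  have hre : z.re = ‖z‖ * Real.cos (Complex.arg z) := by
    rw [Complex.cos_arg hzne]
    field_simp
  have hρr : ρ * ‖z‖ < 2 * Real.cos (Complex.arg z) := by
    rw [lt_div_iff₀ hr] at hρ
    linarith
  set c : ℂ := 1 - (ρ : ℂ) * z with hc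
  have habs2 : ‖z‖ ^ 2 = z.re ^ 2 + z.im ^ 2 := by
    rw [Complex.sq_norm, Complex.normSq_apply]; ring
  have hnorm : ‖c‖ < 1 := by
    have h2 : ‖c‖ ^ 2 < 1 := by
      rw [Complex.sq_norm, hc, Complex.normSq_apply]
      simp only [Complex.sub_re, Complex.sub_im, Complex.one_re, Complex.one_im,
        Complex.mul_re, Complex.mul_im, Complex.ofReal_re, Complex.ofReal_im]
      have key2 : ρ ^ 2 * (z.re ^ 2 + z.im ^ 2) < 2 * ρ * z.re := by
        have h1 : (ρ * ‖z‖) * (ρ * ‖z‖)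
            < (2 * Real.cos z.arg) * (ρ * ‖z‖) :=
          mul_lt_mul_of_pos_right hρr (mul_pos hρ0 hr)
        calc ρ ^ 2 * (z.re ^ 2 + z.im ^ 2)
            = (ρ * ‖z‖) * (ρ * ‖z‖) := by rw [← habs2]; ring
          _ < (2 * Real.cos z.arg) * (ρ * ‖z‖) := h1
          _ = 2 * ρ * z.re := by rw [hre]; ring
      nlinarith [key2]
    nlinarith [norm_nonneg c]
  set d : ℂ := yd / g with hd
  have hgd : g * d = yd := by rw [hd]; field_simp
  have key : ∀ n : ℕ, u (n + 1) - d = c ^ n * (u 1 - d) := by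
    intro n
    induction n with
    | zero => simp
    | succ m ih =>
      have h := hiter (m + 1) (Nat.le_add_left 1 m)
      rw [h]
      have : u (m + 1) + (ρ : ℂ) * gh⁻¹ * (yd - g * u (m + 1)) - d
          = c * (u (m + 1) - d) := by
        rw [hc, hz, hd]
        field_simp
        ring
      rw [this, ih, pow_succ]
      ring
  have hpow : Filter.Tendsto (fun n : ℕ => c ^ (n - 1)) Filter.atTop (nhds 0) := by
    have h1 : Filter.Tendsto (fun n : ℕ => c ^ n) Filter.atTop (nhds 0) :=
      tendsto_pow_atTop_nhds_zero_of_norm_lt_one (by simpa using hnorm)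
    exact h1.comp (Filter.tendsto_sub_atTop_nat 1)
  have hmain : Filter.Tendsto u Filter.atTop (nhds d) := by
    have h2 : Filter.Tendsto (fun n : ℕ => d + c ^ (n - 1) * (u 1 - d))
        Filter.atTop (nhds d) := by
      have := ((hpow.mul_const (u 1 - d)).const_add d)
      simpa using this
    apply h2.congr'
    filter_upwards [Filter.eventually_ge_atTop 1] with n hn
    obtain ⟨m, rfl⟩ := Nat.exists_eq_add_of_le hn
    simp only [Nat.add_comm 1 m, Nat.add_sub_cancel]
    linear_combination -(key m)
  refine ⟨hmain, ?_⟩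
  have := hmain.const_mul g
  simpa [hgd] using this
end

section
/- Let g, ĝ ∈ ℂ be nonzero, with componentwise uncertainty bounds Δa ≥ |Re(g) − Re(ĝ)| and Δb ≥ |Im(g) − Im(ĝ)|. Let ρ* = 2·(|ĝ|² − (Δa·|Re(ĝ)| + Δb·|Im(ĝ)|)) / |ĝ_abs + Δ|², where ĝ_abs = |Re(ĝ)| + i·|Im(ĝ)| and Δ = Δa + i·Δb. Then for every real ρ with 0 < ρ < ρ*, one has |1 − ρ·(g/ĝ)| < 1. -/
lemma key_real (a b x y Δa Δb ρ : ℝ) (ha : |x - a| ≤ Δa) (hb : |y - b| ≤ Δb)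
    (hρ0 : 0 < ρ)
    (h : ρ * ((|a| + Δa) ^ 2 + (|b| + Δb) ^ 2) <
      2 * (a ^ 2 + b ^ 2 - (Δa * |a| + Δb * |b|))) :
    (a - ρ * x) ^ 2 + (b - ρ * y) ^ 2 < a ^ 2 + b ^ 2 := by
  have hx : |x| ≤ |a| + Δa := by
    have := abs_sub_abs_le_abs_sub x a; linarith
  have hy : |y| ≤ |b| + Δb := by
    have := abs_sub_abs_le_abs_sub y b; linarith
  have h1 : x ^ 2 ≤ (|a| + Δa) ^ 2 := by
    rw [← sq_abs x]; exact pow_le_pow_left₀ (abs_nonneg x) hx 2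
  have h2 : y ^ 2 ≤ (|b| + Δb) ^ 2 := by
    rw [← sq_abs y]; exact pow_le_pow_left₀ (abs_nonneg y) hy 2
  have h3 : a ^ 2 - |a| * Δa ≤ a * x := by
    have h31 := neg_abs_le (a * (x - a))
    have h32 : |a * (x - a)| = |a| * |x - a| := abs_mul a (x - a)
    have h33 : |a| * |x - a| ≤ |a| * Δa := mul_le_mul_of_nonneg_left ha (abs_nonneg a)
    nlinarith
  have h4 : b ^ 2 - |b| * Δb ≤ b * y := by
    have h41 := neg_abs_le (b * (y - b))
    have h42 : |b * (y - b)| = |b| * |y - b| := abs_mul b (y - b)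
    have h43 : |b| * |y - b| ≤ |b| * Δb := mul_le_mul_of_nonneg_left hb (abs_nonneg b)
    nlinarith
  nlinarith [mul_lt_mul_of_pos_left h hρ0, mul_le_mul_of_nonneg_left h1 hρ0.le,
    mul_le_mul_of_nonneg_left h2 hρ0.le, mul_le_mul_of_nonneg_left h3 hρ0.le,
    mul_le_mul_of_nonneg_left h4 hρ0.le, sq_nonneg ρ]

theorem stmt_9 (g gh : ℂ) (hg : g ≠ 0) (hgh : gh ≠ 0) (Δa Δb : ℝ)
    (ha : |g.re - gh.re| ≤ Δa) (hb : |g.im - gh.im| ≤ Δb)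
    (ρ : ℝ) (hρ0 : 0 < ρ)
    (hρ : ρ < 2 * (‖gh‖ ^ 2 - (Δa * |gh.re| + Δb * |gh.im|)) /
        ‖(((|gh.re| : ℝ) : ℂ) + Complex.I * (|gh.im| : ℝ)) + ((Δa : ℂ) + Complex.I * Δb)‖ ^ 2) :
    ‖1 - (ρ : ℂ) * (g / gh)‖ < 1 := by
  set a := gh.re; set b := gh.im; set x := g.re; set y := g.im
  have hΔa : 0 ≤ Δa := le_trans (abs_nonneg _) ha
  have hΔb : 0 ≤ Δb := le_trans (abs_nonneg _) hb
  -- compute the denominator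
  have hzre : ((((|a| : ℝ) : ℂ) + Complex.I * (|b| : ℝ)) + ((Δa : ℂ) + Complex.I * Δb)).re = |a| + Δa := by
    simp
  have hzim : ((((|a| : ℝ) : ℂ) + Complex.I * (|b| : ℝ)) + ((Δa : ℂ) + Complex.I * Δb)).im = |b| + Δb := by
    simp
  have hD : ‖(((|a| : ℝ) : ℂ) + Complex.I * (|b| : ℝ)) + ((Δa : ℂ) + Complex.I * Δb)‖ ^ 2
      = (|a| + Δa) ^ 2 + (|b| + Δb) ^ 2 := by
    rw [Complex.sq_norm, Complex.normSq_apply, hzre, hzim]; ring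
  have hgh2 : ‖gh‖ ^ 2 = a ^ 2 + b ^ 2 := by
    rw [Complex.sq_norm, Complex.normSq_apply]; ring
  have hghpos : 0 < a ^ 2 + b ^ 2 := by
    rw [← hgh2]; exact pow_pos (norm_pos_iff.mpr hgh) 2
  have hDpos : 0 < (|a| + Δa) ^ 2 + (|b| + Δb) ^ 2 := by
    nlinarith [sq_abs a, sq_abs b, abs_nonneg a, abs_nonneg b]
  rw [hD, hgh2] at hρ
  have hkey0 : ρ * ((|a| + Δa) ^ 2 + (|b| + Δb) ^ 2) <
      2 * (a ^ 2 + b ^ 2 - (Δa * |a| + Δb * |b|)) := by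
    have := (lt_div_iff₀ hDpos).mp hρ; linarith
  have hkey := key_real a b x y Δa Δb ρ ha hb hρ0 hkey0
  -- rewrite the goal
  have hrw : 1 - (ρ : ℂ) * (g / gh) = (gh - ρ * g) / gh := by
    field_simp
  rw [hrw, norm_div]
  rw [div_lt_one (by simpa using (norm_pos_iff.mpr hgh))]
  have habs : ‖gh - ρ * g‖ ^ 2 < ‖gh‖ ^ 2 := by
    rw [Complex.sq_norm, Complex.normSq_apply, hgh2]
    have hre : (gh - (ρ : ℂ) * g).re = a - ρ * x := by simp [Complex.sub_re, Complex.mul_re]; rfl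
    have him : (gh - (ρ : ℂ) * g).im = b - ρ * y := by simp [Complex.sub_im, Complex.mul_im]; rfl
    rw [hre, him]
    calc (a - ρ * x) * (a - ρ * x) + (b - ρ * y) * (b - ρ * y)
        = (a - ρ * x) ^ 2 + (b - ρ * y) ^ 2 := by ring
      _ < a ^ 2 + b ^ 2 := hkey
  exact lt_of_pow_lt_pow_left₀ 2 (norm_nonneg gh) habs
end

section
/- Fix g ≠ 0 in ℂ, yd ∈ ℂ, and let (ρ_k) be a sequence of real gains and (ĝ_k) a sequence of nonzero complex models such that for every k, |1 − ρ_k·(g/ĝ_k)| ≤ q for some fixed q < 1. Then the iteration u_k = u_{k-1} + ρ_k·ĝ_k⁻¹·(yd − g·u_{k-1}) satisfies |yd − g·u_k| ≤ q^{k-1}·|yd − g·u₁|, and hence g·u_k → yd. -/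
theorem stmt_16 (g : ℂ) (hg : g ≠ 0) (yd : ℂ) (ρ : ℕ → ℝ) (gh : ℕ → ℂ)
    (hgh : ∀ k, gh k ≠ 0) (q : ℝ) (hq : q < 1)
    (hcontract : ∀ k, ‖1 - (ρ k : ℂ) * (g / gh k)‖ ≤ q)
    (u : ℕ → ℂ)
    (hiter : ∀ k, 1 ≤ k → u (k + 1) = u k + (ρ k : ℂ) * (gh k)⁻¹ * (yd - g * u k)) :
    (∀ k, 1 ≤ k →
        ‖yd - g * u k‖ ≤ q ^ (k - 1) * ‖yd - g * u 1‖) ∧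
      Filter.Tendsto (fun k => g * u k) Filter.atTop (nhds yd) := by
  have hq0 : 0 ≤ q := le_trans (norm_nonneg _) (hcontract 0)
  have key : ∀ k, 1 ≤ k → ‖yd - g * u (k + 1)‖ ≤ q * ‖yd - g * u k‖ := by
    intro k hk
    have heq : yd - g * u (k + 1) = (1 - (ρ k : ℂ) * (g / gh k)) * (yd - g * u k) := by
      rw [hiter k hk]
      field_simp [hgh k]
      ring
    rw [heq, norm_mul]
    exact mul_le_mul_of_nonneg_right (hcontract k) (norm_nonneg _)
  have bound : ∀ k, 1 ≤ k →
      ‖yd - g * u k‖ ≤ q ^ (k - 1) * ‖yd - g * u 1‖ := by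
    intro k hk
    induction k, hk using Nat.le_induction with
    | base => simp
    | succ n hn ih =>
        have : ‖yd - g * u (n + 1)‖ ≤ q * ‖yd - g * u n‖ := key n hn
        calc ‖yd - g * u (n + 1)‖ ≤ q * ‖yd - g * u n‖ := this
          _ ≤ q * (q ^ (n - 1) * ‖yd - g * u 1‖) := by
              exact mul_le_mul_of_nonneg_left ih hq0
          _ = q ^ (n + 1 - 1) * ‖yd - g * u 1‖ := by
              rw [Nat.add_sub_cancel]
              rw [← mul_assoc, ← pow_succ']
              congr 2
              omega
    
  refine ⟨bound, ?_⟩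
  rw [Metric.tendsto_atTop]
  intro ε hε
  have htend : Filter.Tendsto (fun k : ℕ => q ^ (k - 1) * ‖yd - g * u 1‖)
      Filter.atTop (nhds 0) := by
    have h1 : Filter.Tendsto (fun k : ℕ => q ^ (k - 1)) Filter.atTop (nhds 0) :=
      (tendsto_pow_atTop_nhds_zero_of_lt_one hq0 hq).comp (Filter.tendsto_sub_atTop_nat 1)
    simpa using h1.mul_const (‖yd - g * u 1‖)
  rw [Metric.tendsto_atTop] at htend
  obtain ⟨N, hN⟩ := htend ε hε
  refine ⟨max N 1, fun n hn => ?_⟩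
  have hn1 : 1 ≤ n := le_trans (le_max_right _ _) hn
  have hnN : N ≤ n := le_trans (le_max_left _ _) hn
  have := hN n hnN
  rw [Real.dist_eq, sub_zero] at this
  have habs : |q ^ (n - 1) * ‖yd - g * u 1‖| =
      q ^ (n - 1) * ‖yd - g * u 1‖ := by
    rw [abs_of_nonneg]
    positivity
  rw [habs] at this
  calc dist (g * u n) yd = ‖yd - g * u n‖ := by
        rw [Complex.dist_eq, norm_sub_rev]
    _ ≤ q ^ (n - 1) * ‖yd - g * u 1‖ := bound n hn1
    _ < ε := this
end
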